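/- Say a linear order L has property (*) if every uncountable subset of L contains an uncountable subset order-isomorphic to a set of reals. If L has property (*) and each L_p (p ∈ L) has property (*), then the lexicographic gluing {(p,q) : p ∈ L, q ∈ L_p} also has property (*). -/
import Mathlib


open Ordinal Set

noncomputable section

/-- Parity of an ordinal: `a = γ + n` with `γ` limit, `n < ω`; even iff `n` is even. -/
def OrdEven (a : Ordinal) : Prop := a % 2 = 0

/-- Upper semicontinuity. -/
def USC {X : Type} [TopologicalSpace X] (f : X → ℝ) : Prop :=
  ∀ r : ℝ, IsOpen (f ⁻¹' Set.Iio r)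

/-- The least ordinal where two transfinite sequences differ. -/
def dOrd (f g : Ordinal → ℝ) : Ordinal := sInf {a | f a ≠ g a}

/-- The alternating lexicographical order on transfinite sequences of reals. -/
def AltLex (f g : Ordinal → ℝ) : Prop :=
  f ≠ g ∧ ((OrdEven (dOrd f g) ∧ f (dOrd f g) < g (dOrd f g)) ∨
    (¬ OrdEven (dOrd f g) ∧ g (dOrd f g) < f (dOrd f g)))

/-- `f` encodes a strictly decreasing countable transfinite sequence in `[0,1]`
with last element `0` at index `ξ` (padded with `0` beyond `ξ`). -/
def IsDSeqLen (f : Ordinal → ℝ) (ξ : Ordinal) : Prop :=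
  ξ < (Cardinal.aleph 1).ord ∧ (∀ a, f a ∈ Set.Icc (0:ℝ) 1) ∧
  (∀ a b, a < b → b ≤ ξ → f b < f a) ∧ (∀ a, ξ ≤ a → f a = 0)

/-- Membership in `[0,1]^{<ω₁}_{↘0}`. -/
def IsDSeq (f : Ordinal → ℝ) : Prop := ∃ ξ, IsDSeqLen f ξ

/-- Property (*): every uncountable subset contains an uncountable subset
order-isomorphic to a set of reals. -/
def PropStarRel (α : Type) (r : α → α → Prop) : Prop :=
  ∀ A : Set α, ¬ A.Countable → ∃ B ⊆ A, ¬ B.Countable ∧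
    ∃ g : α → ℝ, (∀ x ∈ B, ∀ y ∈ B, r x y → g x < g y) ∧ Set.InjOn g B

theorem stmt_17 (L : Type) [LinearOrder L] (Lp : L → Type) [∀ p, LinearOrder (Lp p)]
    (hL : PropStarRel L (· < ·)) (hLp : ∀ p, PropStarRel (Lp p) (· < ·)) :
    PropStarRel (Σ p : L, Lp p)
      (fun x y => x.1 < y.1 ∨ ∃ h : x.1 = y.1, h ▸ x.2 < y.2) := by
  intro A hA
  by_cases hfib : ∃ p, ¬ {q | (⟨p, q⟩ : Σ p, Lp p) ∈ A}.Countable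
  · obtain ⟨p, hp⟩ := hfib
    obtain ⟨B', hB'sub, hB'unc, g, hg, hginj⟩ := hLp p _ hp
    refine ⟨Sigma.mk p '' B', ?_, ?_,
      fun x => if h : x.1 = p then g (h ▸ x.2) else 0, ?_, ?_⟩
    · rintro x ⟨q, hq, rfl⟩; exact hB'sub hq
    · intro hc
      exact hB'unc ((hc.preimage sigma_mk_injective).mono
        (Set.subset_preimage_image _ _))
    · rintro x ⟨qx, hqx, rfl⟩ y ⟨qy, hqy, rfl⟩ hr
      rcases hr with h | ⟨h, hlt⟩
      · exact absurd h (lt_irrefl p)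
      · simp only [dif_pos rfl]
        exact hg _ hqx _ hqy hlt
    · rintro x ⟨qx, hqx, rfl⟩ y ⟨qy, hqy, rfl⟩ heq
      simp only [dif_pos rfl] at heq
      have : qx = qy := hginj hqx hqy heq
      subst this; rfl
  · push_neg at hfib
    have hPunc : ¬ (Sigma.fst '' A).Countable := by
      intro hPc
      apply hA
      have hsub : A ⊆ ⋃ p ∈ Sigma.fst '' A,
          Sigma.mk p '' {q | (⟨p, q⟩ : Σ p, Lp p) ∈ A} := by
        rintro ⟨p, q⟩ hx
        exact Set.mem_biUnion ⟨⟨p, q⟩, hx, rfl⟩ ⟨q, hx, rfl⟩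
      exact ((hPc.biUnion fun p _ => (hfib p).image _).mono hsub)
    obtain ⟨Q, hQP, hQunc, g, hg, hginj⟩ := hL _ hPunc
    have hne : Nonempty (Σ p : L, Lp p) := by
      have hQne : Q.Nonempty := by
        rw [Set.nonempty_iff_ne_empty]
        intro h
        rw [h] at hQunc
        exact hQunc Set.countable_empty
      rcases hQne with ⟨p, hp⟩
      rcases hQP hp with ⟨x, _, _⟩
      exact ⟨x⟩
    have hch : ∀ p ∈ Q, ∃ x, x ∈ A ∧ x.1 = p := by
      intro p hp
      rcases hQP hp with ⟨x, hxA, hx1⟩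
      exact ⟨x, hxA, hx1⟩
    choose! f hfA hfp using hch
    refine ⟨f '' Q, ?_, ?_, fun x => g x.1, ?_, ?_⟩
    · rintro x ⟨q, hq, rfl⟩; exact hfA q hq
    · intro hc
      apply hQunc
      refine ((hc.image Sigma.fst).mono ?_)
      intro p hp
      exact ⟨f p, Set.mem_image_of_mem f hp, hfp p hp⟩
    · rintro x ⟨px, hpx, rfl⟩ y ⟨py, hpy, rfl⟩ hr
      have e1 : (f px).1 = px := hfp px hpx
      have e2 : (f py).1 = py := hfp py hpy
      rcases hr with h | ⟨h, hlt⟩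
      · exact hg _ (by rw [e1]; exact hpx) _ (by rw [e2]; exact hpy) h
      · have hpp : px = py := by rw [← e1, ← e2, h]
        subst hpp
        exact absurd hlt (lt_irrefl _)
    · rintro x ⟨px, hpx, rfl⟩ y ⟨py, hpy, rfl⟩ heq
      have e1 : (f px).1 = px := hfp px hpx
      have e2 : (f py).1 = py := hfp py hpy
      have : px = py := by
        rw [← e1, ← e2]
        exact hginj (by rw [e1]; exact hpx) (by rw [e2]; exact hpy) heq
      subst this; rfl
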